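/- Let f : ℝ^N → ℝ^m be twice continuously differentiable, x̂ ∈ ℝ^N with f(x̂) = 0, and suppose a sequence (x_k) converges to x̂ and satisfies x_{k+1} = x_k + p_k where p_k = −A_k⁺ f(x_k) for matrices A_k ∈ ℝ^{m×N} agreeing with the Jacobian J(x_k) on a subset of columns (zero elsewhere), with A_k⁺ A_k (x̂ − x_k) = x̂ − x_k and ‖A_k⁺‖ ≤ C uniformly. Then (x_k) converges to x̂ quadratically: ‖x_{k+1} − x̂‖ ≤ C' ‖x_k − x̂‖² for some constant C' and all sufficiently large k. -/

import Mathlib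

open Matrix Filter

def IsMoorePenrose {m n : ℕ} (L : Matrix (Fin m) (Fin n) ℝ)
    (Lp : Matrix (Fin n) (Fin m) ℝ) : Prop :=
  L * Lp * L = L ∧ Lp * L * Lp = Lp ∧ (L * Lp)ᵀ = L * Lp ∧ (Lp * L)ᵀ = Lp * L

/-- the Euclidean norm of a vector -/
noncomputable def enorm {k : ℕ} (v : Fin k → ℝ) : ℝ := Real.sqrt (v ⬝ᵥ v)

lemma enorm_nonneg' {k : ℕ} (v : Fin k → ℝ) : 0 ≤ _root_.enorm v := Real.sqrt_nonneg _

lemma norm_le_enorm {k : ℕ} (v : Fin k → ℝ) : ‖v‖ ≤ _root_.enorm v := by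
  rw [pi_norm_le_iff_of_nonneg (enorm_nonneg' v)]
  intro i
  have h1 : ‖v i‖ = Real.sqrt (v i * v i) := by
    rw [Real.sqrt_mul_self_eq_abs]; rfl
  rw [h1, _root_.enorm, dotProduct]
  exact Real.sqrt_le_sqrt (Finset.single_le_sum (f := fun j => v j * v j)
    (fun j _ => mul_self_nonneg _) (Finset.mem_univ i))

lemma enorm_le_sqrt_mul_norm {k : ℕ} (v : Fin k → ℝ) :
    _root_.enorm v ≤ Real.sqrt k * ‖v‖ := by
  have h1 : v ⬝ᵥ v ≤ (k : ℝ) * ‖v‖ ^ 2 := by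
    rw [dotProduct]
    calc ∑ i, v i * v i ≤ ∑ _i : Fin k, ‖v‖ ^ 2 := by
          apply Finset.sum_le_sum
          intro i _
          have : ‖v i‖ ≤ ‖v‖ := norm_le_pi_norm v i
          calc v i * v i = ‖v i‖ ^ 2 := by rw [sq]; simp [Real.norm_eq_abs, abs_mul_abs_self]
            _ ≤ ‖v‖ ^ 2 := by exact pow_le_pow_left₀ (norm_nonneg _) this 2
      _ = (k : ℝ) * ‖v‖ ^ 2 := by simp [Finset.sum_const, Finset.card_univ, mul_comm]
  calc _root_.enorm v ≤ Real.sqrt ((k : ℝ) * ‖v‖ ^ 2) := Real.sqrt_le_sqrt h1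
    _ = Real.sqrt k * ‖v‖ := by
        rw [Real.sqrt_mul (Nat.cast_nonneg k), Real.sqrt_sq (norm_nonneg v)]

/-- quadratic convergence of the greedy Gauss–Newton iteration
`x_{k+1} = x_k - A_k⁺ f(x_k)`, where each `A_k` agrees with the Jacobian of `f`
at `x_k` on a subset of columns and is zero elsewhere, `A_k⁺ A_k (x̂ - x_k) = x̂ - x_k`,
and `‖A_k⁺‖ ≤ C` uniformly, assuming `x_k → x̂` with `f(x̂) = 0`. -/
theorem stmt11 {N m : ℕ} (f : (Fin N → ℝ) → (Fin m → ℝ)) (hf : ContDiff ℝ 2 f)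
    (xhat : Fin N → ℝ) (hfx : f xhat = 0)
    (x : ℕ → (Fin N → ℝ)) (hconv : Tendsto x atTop (nhds xhat))
    (A : ℕ → Matrix (Fin m) (Fin N) ℝ) (Ap : ℕ → Matrix (Fin N) (Fin m) ℝ)
    (hMP : ∀ k, IsMoorePenrose (A k) (Ap k))
    (hcols : ∀ k, ∀ j : Fin N,
      (∀ i, A k i j = fderiv ℝ f (x k) (Pi.single j 1) i) ∨ (∀ i, A k i j = 0))
    (hfix : ∀ k, Ap k *ᵥ (A k *ᵥ (xhat - x k)) = xhat - x k)
    (C : ℝ) (hC : ∀ k, ∀ v : Fin m → ℝ, _root_.enorm (Ap k *ᵥ v) ≤ C * _root_.enorm v)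
    (hupd : ∀ k, x (k + 1) = x k - Ap k *ᵥ f (x k)) :
    ∃ C' : ℝ, ∃ K : ℕ, ∀ k ≥ K,
      _root_.enorm (x (k + 1) - xhat) ≤ C' * _root_.enorm (x k - xhat) ^ 2 := by
  -- the derivative is locally Lipschitz near xhat
  have hD1 : ContDiff ℝ 1 (fderiv ℝ f) := hf.fderiv_right (by norm_num)
  obtain ⟨K0, t, ht, hlip⟩ := hD1.contDiffAt.exists_lipschitzOnWith (x := xhat)
  obtain ⟨ε, hε, hball⟩ := Metric.mem_nhds_iff.1 ht
  obtain ⟨K, hK⟩ := Metric.tendsto_atTop.1 hconv ε hε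
  set Cp : ℝ := max C 0 with hCp
  refine ⟨Cp * (Real.sqrt m * K0), K, ?_⟩
  intro k hk
  set D : (Fin N → ℝ) →L[ℝ] (Fin m → ℝ) := fderiv ℝ f (x k) with hDdef
  -- components of v vanish where A k has a zero column
  have hvz : ∀ j, (∀ i, A k i j = 0) → (xhat - x k) j = 0 := by
    intro j hj
    have hsym := (hMP k).2.2.2
    have hPv : (Ap k * A k) *ᵥ (xhat - x k) = xhat - x k := by
      rw [← mulVec_mulVec]; exact hfix k
    have hrow : ∀ i, (Ap k * A k) j i = 0 := by
      intro i
      have h1 : (Ap k * A k) j i = (Ap k * A k) i j := by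
        conv_lhs => rw [← hsym]
        rfl
      rw [h1, Matrix.mul_apply]
      apply Finset.sum_eq_zero
      intro l _
      rw [hj l, mul_zero]
    have := congrFun hPv j
    rw [mulVec, dotProduct] at this
    rw [← this]
    apply Finset.sum_eq_zero
    intro i _
    rw [hrow i, zero_mul]
  -- A k acts on v like the Jacobian
  have hAv : A k *ᵥ (xhat - x k) = D (xhat - x k) := by
    have hDv : D (xhat - x k) = ∑ j, (xhat - x k) j • D (Pi.single j 1) := by
      conv_lhs => rw [show xhat - x k = ∑ j, (xhat - x k) j • (Pi.single j 1 : Fin N → ℝ) by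
        conv_lhs => rw [pi_eq_sum_univ (xhat - x k)]
        refine Finset.sum_congr rfl fun j _ => ?_
        congr 1
        funext i
        simp [Pi.single_apply, eq_comm]]
      rw [map_sum]
      simp
    funext i
    rw [hDv]
    simp only [mulVec, dotProduct, Finset.sum_apply, Pi.smul_apply, smul_eq_mul]
    refine Finset.sum_congr rfl fun j _ => ?_
    rcases hcols k j with h | h
    · rw [h i]; ring
    · rw [h i, hvz j h]; ring
  -- key algebraic identity
  have key : x (k + 1) - xhat = Ap k *ᵥ (A k *ᵥ (x k - xhat) - f (x k)) := by
    rw [hupd k, mulVec_sub]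
    have h2 : A k *ᵥ (x k - xhat) = -(A k *ᵥ (xhat - x k)) := by
      rw [← mulVec_neg, neg_sub]
    rw [h2, mulVec_neg, hfix k]
    abel
  -- Taylor estimate on the segment from x k to xhat
  have hxball : x k ∈ Metric.ball xhat ε := Metric.mem_ball.2 (hK k hk)
  have hseg : segment ℝ (x k) xhat ⊆ t :=
    fun z hz => hball ((convex_ball xhat ε).segment_subset hxball
      (Metric.mem_ball_self hε) hz)
  have hbound : ∀ z ∈ segment ℝ (x k) xhat,
      ‖fderiv ℝ f z - D‖ ≤ (K0 : ℝ) * ‖xhat - x k‖ := by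
    intro z hz
    have h1 : dist (fderiv ℝ f z) (fderiv ℝ f (x k)) ≤ (K0 : ℝ) * dist z (x k) :=
      hlip.dist_le_mul z (hseg hz) (x k) (hseg (left_mem_segment ℝ _ _))
    rw [dist_eq_norm, dist_eq_norm] at h1
    have h2 : ‖z - x k‖ ≤ ‖xhat - x k‖ := by
      obtain ⟨a, b, ha, hb, hab, rfl⟩ := hz
      have : a • x k + b • xhat - x k = b • (xhat - x k) := by
        rw [show a = 1 - b by linarith, smul_sub, sub_smul, one_smul]
        abel
      rw [this, norm_smul, Real.norm_eq_abs, abs_of_nonneg hb]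
      nlinarith [norm_nonneg (xhat - x k)]
    calc ‖fderiv ℝ f z - D‖ ≤ (K0 : ℝ) * ‖z - x k‖ := h1
      _ ≤ (K0 : ℝ) * ‖xhat - x k‖ := by
          exact mul_le_mul_of_nonneg_left h2 K0.2
  have htay : ‖f xhat - f (x k) - D (xhat - x k)‖ ≤
      ((K0 : ℝ) * ‖xhat - x k‖) * ‖xhat - x k‖ :=
    (convex_segment (x k) xhat).norm_image_sub_le_of_norm_hasFDerivWithin_le'
      (fun z _ => ((hf.differentiable (by norm_num) z).hasFDerivAt).hasFDerivWithinAt)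
      hbound (left_mem_segment ℝ _ _) (right_mem_segment ℝ _ _)
  -- rewrite the residual
  set w : Fin m → ℝ := A k *ᵥ (x k - xhat) - f (x k) with hw
  have hw2 : w = f xhat - f (x k) - D (xhat - x k) := by
    rw [hw, hfx]
    have h2 : A k *ᵥ (x k - xhat) = -(D (xhat - x k)) := by
      rw [← hAv, ← mulVec_neg, neg_sub]
    rw [h2]
    abel
  have hwnorm : ‖w‖ ≤ (K0 : ℝ) * ‖xhat - x k‖ ^ 2 := by
    rw [hw2, sq]
    calc ‖f xhat - f (x k) - D (xhat - x k)‖ ≤ _ := htay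
      _ = (K0 : ℝ) * (‖xhat - x k‖ * ‖xhat - x k‖) := by ring
  -- put everything together
  have hxk : ‖xhat - x k‖ ≤ _root_.enorm (x k - xhat) := by
    rw [norm_sub_rev]; exact norm_le_enorm _
  have henw : _root_.enorm w ≤ Real.sqrt m * ((K0 : ℝ) * _root_.enorm (x k - xhat) ^ 2) := by
    calc _root_.enorm w ≤ Real.sqrt m * ‖w‖ := enorm_le_sqrt_mul_norm w
      _ ≤ Real.sqrt m * ((K0 : ℝ) * ‖xhat - x k‖ ^ 2) := by
          apply mul_le_mul_of_nonneg_left hwnorm (Real.sqrt_nonneg _)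
      _ ≤ Real.sqrt m * ((K0 : ℝ) * _root_.enorm (x k - xhat) ^ 2) := by
          apply mul_le_mul_of_nonneg_left _ (Real.sqrt_nonneg _)
          apply mul_le_mul_of_nonneg_left _ K0.2
          exact pow_le_pow_left₀ (norm_nonneg _) hxk 2
  calc _root_.enorm (x (k + 1) - xhat) = _root_.enorm (Ap k *ᵥ w) := by rw [key]
    _ ≤ C * _root_.enorm w := hC k w
    _ ≤ Cp * _root_.enorm w := by
        apply mul_le_mul_of_nonneg_right (le_max_left C 0) (enorm_nonneg' w)
    _ ≤ Cp * (Real.sqrt m * ((K0 : ℝ) * _root_.enorm (x k - xhat) ^ 2)) := by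
        apply mul_le_mul_of_nonneg_left henw (le_max_right C 0)
    _ = Cp * (Real.sqrt m * (K0 : ℝ)) * _root_.enorm (x k - xhat) ^ 2 := by ring
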